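/- Let f be a radius-2 rule that solves the parity problem on odd circular lattices. Then among the five neighbourhood values f(10000), f(01000), f(00100), f(00010), f(00001), the number equal to 1 is odd and at least 3 (i.e., exactly 3 or 5 of them equal 1). -/

import Mathlib

/-- Global rule of a one-dimensional binary circular CA of radius `r` on `n` cells. -/
def glob (r n : ℕ) (f : (Fin (2*r+1) → Bool) → Bool) (X : ZMod n → Bool) :
    ZMod n → Bool :=
  fun i => f (fun j => X (i + ((j : ℕ) : ZMod n) - (r : ZMod n)))

/-- Number of 1s (cells in state `true`) of a circular configuration. -/
def ones (n : ℕ) (X : ZMod n → Bool) : ℕ :=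
  ((Finset.range n).filter (fun i : ℕ => X (i : ZMod n) = true)).card

def allZeros (n : ℕ) : ZMod n → Bool := fun _ => false
def allOnes (n : ℕ) : ZMod n → Bool := fun _ => true

/-- The CA converges from `X` to `P`: `P` is a fixed point reached in finitely many steps. -/
def convergesTo (r n : ℕ) (f : (Fin (2*r+1) → Bool) → Bool)
    (X P : ZMod n → Bool) : Prop :=
  glob r n f P = P ∧ ∃ k, (glob r n f)^[k] X = P

/-- A rule is perfect if it solves the parity problem on every odd-sized circular lattice. -/
def PerfectRule (r : ℕ) (f : (Fin (2*r+1) → Bool) → Bool) : Prop :=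
  ∀ n : ℕ, Odd n → ∀ X : ZMod n → Bool,
    (Odd (ones n X) → convergesTo r n f X (allOnes n)) ∧
    (Even (ones n X) → convergesTo r n f X (allZeros n))

/-- Number of active transitions (cells changing state) in one step. -/
def activeCount (r n : ℕ) (f : (Fin (2*r+1) → Bool) → Bool) (X : ZMod n → Bool) : ℕ :=
  ((Finset.range n).filter
    (fun i : ℕ => glob r n f X (i : ZMod n) ≠ X (i : ZMod n))).card

def Xp (p : ZMod 7) : ZMod 7 → Bool := fun i => decide (i = p)

lemma equivar (f : (Fin 5 → Bool) → Bool) (t : ZMod 7) (X : ZMod 7 → Bool) :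
    glob 2 7 f (fun i => X (i + t)) = fun i => glob 2 7 f X (i + t) := by
  funext i
  unfold glob
  congr 1
  funext j
  ring_nf

/-- for a perfect radius-2 rule, exactly 3 or 5 of the neighbourhoods
`10000, 01000, 00100, 00010, 00001` map to 1. -/
theorem stmt5 (f : (Fin (2*2+1) → Bool) → Bool) (hf : PerfectRule 2 f) :
    ([f ![true,false,false,false,false], f ![false,true,false,false,false],
      f ![false,false,true,false,false], f ![false,false,false,true,false],
      f ![false,false,false,false,true]].count true = 3) ∨
    ([f ![true,false,false,false,false], f ![false,true,false,false,false],
      f ![false,false,true,false,false], f ![false,false,false,true,false],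
      f ![false,false,false,false,true]].count true = 5) := by

  have h7 : Odd 7 := by decide
  have hfix1 : glob 2 7 f (allOnes 7) = allOnes 7 :=
    ((hf 7 h7 (allOnes 7)).1 (by decide)).1
  have hfix0 : glob 2 7 f (allZeros 7) = allZeros 7 :=
    ((hf 7 h7 (allZeros 7)).2 (by decide)).1
  have hzero : f (fun _ => false) = false := by
    have := congrFun hfix0 0
    simpa [glob, allZeros] using this
  -- the image of the single-1 configuration
  have hY : glob 2 7 f (Xp 0) = (fun i : ZMod 7 =>
      if i = 0 then f ![false,false,true,false,false]
      else if i = 1 then f ![false,true,false,false,false]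
      else if i = 2 then f ![true,false,false,false,false]
      else if i = 5 then f ![false,false,false,false,true]
      else if i = 6 then f ![false,false,false,true,false]
      else f (fun _ => false)) := by
    funext i
    fin_cases i <;> simp only [glob] <;> norm_num <;>
      (congr 1; funext j; fin_cases j <;> decide)
  rw [hzero] at hY
  obtain ⟨a, ha⟩ : ∃ x, f ![true,false,false,false,false] = x := ⟨_, rfl⟩
  obtain ⟨b, hb⟩ : ∃ x, f ![false,true,false,false,false] = x := ⟨_, rfl⟩
  obtain ⟨c, hc⟩ : ∃ x, f ![false,false,true,false,false] = x := ⟨_, rfl⟩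
  obtain ⟨d, hd⟩ : ∃ x, f ![false,false,false,true,false] = x := ⟨_, rfl⟩
  obtain ⟨e, he⟩ : ∃ x, f ![false,false,false,false,true] = x := ⟨_, rfl⟩
  rw [ha, hb, hc, hd, he] at hY ⊢
  obtain ⟨hfixO, k, hk⟩ := (hf 7 h7 (Xp 0)).1 (by decide)
  set T := [a, b, c, d, e].count true with hT
  have hcount : ones 7 (glob 2 7 f (Xp 0)) = T := by
    rw [hY]
    rcases a <;> rcases b <;> rcases c <;> rcases d <;> rcases e <;> decide
  -- T is odd
  have hTodd : Odd T := by
    rcases Nat.even_or_odd T with hev | hod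
    · exfalso
      obtain ⟨_, m, hm⟩ := (hf 7 h7 (glob 2 7 f (Xp 0))).2 (hcount ▸ hev)
      have e1 : (glob 2 7 f)^[k + (m+1)] (Xp 0) = allZeros 7 := by
        rw [Function.iterate_add_apply]
        rw [Function.iterate_succ_apply, hm]
        exact Function.iterate_fixed hfix0 k
      have e2 : (glob 2 7 f)^[k + (m+1)] (Xp 0) = allOnes 7 := by
        rw [Nat.add_comm, Function.iterate_add_apply, hk]
        exact Function.iterate_fixed hfix1 (m+1)
      have := congrFun (e1 ▸ e2) 0
      simp [allZeros, allOnes] at this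
    · exact hod
  -- T ≠ 1
  have hT1 : T ≠ 1 := by
    intro h1
    -- then glob (Xp 0) = Xp q for some q
    obtain ⟨q, hq⟩ : ∃ q : ZMod 7, glob 2 7 f (Xp 0) = Xp q := by
      rw [hY]
      rcases a <;> rcases b <;> rcases c <;> rcases d <;> rcases e <;>
        simp_all <;> first
        | exact ⟨2, by decide⟩
        | exact ⟨1, by decide⟩
        | exact ⟨0, by decide⟩
        | exact ⟨5, by decide⟩
        | exact ⟨6, by decide⟩
    have hstep : ∀ p : ZMod 7, glob 2 7 f (Xp p) = Xp (p + q) := by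
      intro p
      have h1' : Xp p = fun i => Xp 0 (i + (-p)) := by
        funext i; simp [Xp, add_neg_eq_zero]
      rw [h1', equivar, hq]
      funext i
      simp [Xp, ← sub_eq_add_neg, sub_eq_iff_eq_add, add_comm]
    have hiter : ∀ m : ℕ, ∃ p : ZMod 7, (glob 2 7 f)^[m] (Xp 0) = Xp p := by
      intro m
      induction m with
      | zero => exact ⟨0, rfl⟩
      | succ m ih =>
        obtain ⟨p, hp⟩ := ih
        exact ⟨p + q, by rw [Function.iterate_succ_apply', hp, hstep]⟩
    obtain ⟨p, hp⟩ := hiter k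
    rw [hk] at hp
    have h1 := congrFun hp p
    have h2 := congrFun hp (p+1)
    simp [allOnes, Xp] at h2
    exact absurd h2 (by decide)
  have hle : T ≤ 5 := by
    rw [hT]
    exact List.count_le_length
  rw [Nat.odd_iff] at hTodd
  omega
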